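/- Let M be an inverse monoid presented by [X : R], with presentation map θ : FIM(X) → M factored as FIM(X) →τ T →ψ M with τ idempotent pure and ψ idempotent separating, where T = FIM(X)/θ_min. Let Sq(P) be the Squier complex with vertex set T and let π(Sq(P), T) be its fundamental groupoid, with T-actions on edges t ▷ (p,l,r,q) = (tp,l,r,q) and (p,l,r,q) ◁ t = (p,l,r,qt). Then π(Sq(P), T) is a pseudoregular groupoid which is monoidal: the operations ∗ and ⊛ coincide. -/
import Mathlib


/-- An inverse monoid. -/
class InverseMonoid (M : Type*) extends Monoid M, Inv M where
  mul_inv_mul : ∀ a : M, a * a⁻¹ * a = a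
  inv_mul_inv : ∀ a : M, a⁻¹ * a * a⁻¹ = a⁻¹
  idem_comm : ∀ e f : M, e * e = e → f * f = f → e * f = f * e

/-- A semiregular groupoid: a groupoid (given algebraically by its set of arrows `G`
over a vertex monoid `V`, with totalised composition `comp` whose axioms are guarded by
the composability condition `r α = d β`) together with left and right actions of the
vertex monoid `V` on arrows, satisfying the axioms of Definition 2.1. -/
structure SemiregularGroupoid (V : Type*) [Monoid V] (G : Type*) where
  d : G → V
  r : G → V
  comp : G → G → G
  id : V → G
  inv : G → G
  d_id : ∀ v, d (id v) = v
  r_id : ∀ v, r (id v) = v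
  d_comp : ∀ α β, r α = d β → d (comp α β) = d α
  r_comp : ∀ α β, r α = d β → r (comp α β) = r β
  comp_assoc : ∀ α β γ, r α = d β → r β = d γ →
    comp (comp α β) γ = comp α (comp β γ)
  id_comp : ∀ α, comp (id (d α)) α = α
  comp_id : ∀ α, comp α (id (r α)) = α
  d_inv : ∀ α, d (inv α) = r α
  r_inv : ∀ α, r (inv α) = d α
  comp_inv : ∀ α, comp α (inv α) = id (d α)
  inv_comp : ∀ α, comp (inv α) α = id (r α)
  actL : V → G → G
  actR : G → V → G
  actL_mul : ∀ x y α, actL (x * y) α = actL x (actL y α)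
  actR_mul : ∀ α x y, actR α (x * y) = actR (actR α x) y
  actL_actR : ∀ x α y, actR (actL x α) y = actL x (actR α y)
  one_actL : ∀ α, actL 1 α = α
  actR_one : ∀ α, actR α 1 = α
  d_actL : ∀ x α, d (actL x α) = x * d α
  d_actR : ∀ α x, d (actR α x) = d α * x
  r_actL : ∀ x α, r (actL x α) = x * r α
  r_actR : ∀ α x, r (actR α x) = r α * x
  actL_comp : ∀ x α β, r α = d β → actL x (comp α β) = comp (actL x α) (actL x β)
  actR_comp : ∀ α β x, r α = d β → actR (comp α β) x = comp (actR α x) (actR β x)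
  actL_id : ∀ x y, actL x (id y) = id (x * y)
  actR_id : ∀ x y, actR (id x) y = id (x * y)

/-- The operation `α ∗ β = (α ◁ βd) ∘ (αr ▷ β)`. -/
def SemiregularGroupoid.star {V : Type*} [Monoid V] {G : Type*}
    (S : SemiregularGroupoid V G) (α β : G) : G :=
  S.comp (S.actR α (S.d β)) (S.actL (S.r α) β)

/-- The operation `α ⊛ β = (αd ▷ β) ∘ (α ◁ βr)`. -/
def SemiregularGroupoid.ostar {V : Type*} [Monoid V] {G : Type*}
    (S : SemiregularGroupoid V G) (α β : G) : G :=
  S.comp (S.actL (S.d α) β) (S.actR α (S.r β))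

/-- The subgraph-generated arrows of a groupoid: those obtained from a set `Edg` of
edges and the identities by composition and inversion. -/
inductive GenBy {V : Type*} [Monoid V] {G : Type*} (S : SemiregularGroupoid V G)
    (Edg : Set G) : G → Prop
  | edge : ∀ γ ∈ Edg, GenBy S Edg γ
  | idm : ∀ v : V, GenBy S Edg (S.id v)
  | inv : ∀ γ : G, GenBy S Edg γ → GenBy S Edg (S.inv γ)
  | comp : ∀ γ δ : G, S.r γ = S.d δ → GenBy S Edg γ → GenBy S Edg δ →
      GenBy S Edg (S.comp γ δ)


namespace SemiregularGroupoid

variable {V : Type*} [Monoid V] {G : Type*} (S : SemiregularGroupoid V G)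

lemma inv_unique {α β : G} (h1 : S.r α = S.d β) (h2 : S.comp α β = S.id (S.d α)) :
    β = S.inv α := by
  have h3 : S.comp (S.inv α) (S.comp α β) = S.comp (S.inv α) (S.id (S.d α)) := by rw [h2]
  rw [← S.comp_assoc _ _ _ (S.r_inv α) h1, S.inv_comp, h1, S.id_comp,
    ← S.r_inv α, S.comp_id] at h3
  exact h3

lemma actR_inv (α : G) (x : V) : S.actR (S.inv α) x = S.inv (S.actR α x) := by
  apply S.inv_unique
  · rw [S.r_actR, S.d_actR, S.d_inv]
  · rw [← S.actR_comp α (S.inv α) x (S.d_inv α).symm, S.comp_inv, S.actR_id, S.d_actR]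

lemma actL_inv (x : V) (α : G) : S.actL x (S.inv α) = S.inv (S.actL x α) := by
  apply S.inv_unique
  · rw [S.r_actL, S.d_actL, S.d_inv]
  · rw [← S.actL_comp x α (S.inv α) (S.d_inv α).symm, S.comp_inv, S.actL_id, S.d_actL]

lemma cross {X A B Y : G} (h1 : S.r X = S.d B) (h2 : S.r A = S.d Y)
    (h3 : S.d X = S.d A) (_h4 : S.r B = S.r Y)
    (h : S.comp X B = S.comp A Y) :
    S.comp (S.inv X) A = S.comp B (S.inv Y) := by
  have hB : B = S.comp (S.inv X) (S.comp A Y) := by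
    rw [← h, ← S.comp_assoc _ _ _ (S.r_inv X) h1, S.inv_comp, h1, S.id_comp]
  have hA : S.comp (S.comp A Y) (S.inv Y) = A := by
    rw [S.comp_assoc _ _ _ h2 (S.d_inv Y).symm, S.comp_inv, ← h2, S.comp_id]
  have hc : S.r (S.inv X) = S.d (S.comp A Y) := by
    rw [S.r_inv, S.d_comp _ _ h2, h3]
  have hc2 : S.r (S.comp A Y) = S.d (S.inv Y) := by
    rw [S.r_comp _ _ h2, S.d_inv]
  calc S.comp (S.inv X) A
      = S.comp (S.inv X) (S.comp (S.comp A Y) (S.inv Y)) := by rw [hA]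
    _ = S.comp (S.comp (S.inv X) (S.comp A Y)) (S.inv Y) := by
        rw [S.comp_assoc _ _ _ hc hc2]
    _ = S.comp B (S.inv Y) := by rw [← hB]

end SemiregularGroupoid

/-- the fundamental groupoid of the Squier complex of an inverse monoid
presentation is a monoidal pseudoregular groupoid.  Here `T` is the inverse monoid
`T(M,X) = FIM(X)/θ_min`, `Rel` is the set of relations with sides `lm, rm : Rel → T`
(the images of `l`, `r` under `ρτ`), and `Γ` is the fundamental groupoid `π(Sq(P),T)`,
a semiregular groupoid over `T` whose arrows are generated by the (homotopy classes of)
edges `(p, l, r, q)` with `d = p(lρτ)q`, `r = p(rρτ)q`, on which the `T`-actions act by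
`t ▷ (p,l,r,q) = (tp,l,r,q)`, `(p,l,r,q) ◁ t = (p,l,r,qt)`, and in which the 2-cells of
the Squier complex give the homotopy relation for non-overlapping applications of
relations.  Conclusion: the operations `∗` and `⊛` coincide, i.e. `Γ` is monoidal
(and pseudoregular, its vertex set being the inverse monoid `T`). -/
theorem stmt15 {T : Type*} [InverseMonoid T] {Γ Rel : Type*}
    (S : SemiregularGroupoid T Γ)
    (edge : T → Rel → T → Γ) (lm rm : Rel → T)
    (hd : ∀ p s q, S.d (edge p s q) = p * lm s * q)
    (hr : ∀ p s q, S.r (edge p s q) = p * rm s * q)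
    (hactL : ∀ t p s q, S.actL t (edge p s q) = edge (t * p) s q)
    (hactR : ∀ p s q t, S.actR (edge p s q) t = edge p s (q * t))
    (h2cell : ∀ p s q p' s' q',
      S.comp (edge p s (q * p' * lm s' * q')) (edge (p * rm s * q * p') s' q') =
      S.comp (edge (p * lm s * q * p') s' q') (edge p s (q * p' * rm s' * q')))
    (hgen : ∀ γ : Γ, GenBy S {γ | ∃ p s q, γ = edge p s q} γ) :
    ∀ α β : Γ, S.star α β = S.ostar α β := by
  set E : Set Γ := {γ | ∃ p s q, γ = edge p s q} with hE
  have star_idL : ∀ v b, S.star (S.id v) b = S.actL v b := by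
    intro v b
    simp only [SemiregularGroupoid.star]
    rw [S.actR_id, S.r_id, ← S.d_actL, S.id_comp]
  have ostar_idL : ∀ v b, S.ostar (S.id v) b = S.actL v b := by
    intro v b
    simp only [SemiregularGroupoid.ostar]
    rw [S.d_id, S.actR_id, ← S.r_actL, S.comp_id]
  have star_idR : ∀ a v, S.star a (S.id v) = S.actR a v := by
    intro a v
    simp only [SemiregularGroupoid.star]
    rw [S.d_id, S.actL_id, ← S.r_actR, S.comp_id]
  have ostar_idR : ∀ a v, S.ostar a (S.id v) = S.actR a v := by
    intro a v
    simp only [SemiregularGroupoid.ostar]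
    rw [S.r_id, S.actL_id, ← S.d_actR, S.id_comp]
  have hedge : ∀ p s q p' s' q',
      S.star (edge p s q) (edge p' s' q') = S.ostar (edge p s q) (edge p' s' q') := by
    intro p s q p' s' q'
    simp only [SemiregularGroupoid.star, SemiregularGroupoid.ostar, hd, hr, hactL, hactR,
      ← mul_assoc]
    exact h2cell p s q p' s' q'
  have hinvL : ∀ a b, S.star a b = S.ostar a b →
      S.star (S.inv a) b = S.ostar (S.inv a) b := by
    intro a b h
    simp only [SemiregularGroupoid.star, SemiregularGroupoid.ostar] at h ⊢
    rw [S.actR_inv, S.r_inv, S.d_inv, S.actR_inv]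
    exact S.cross (by rw [S.r_actR, S.d_actL]) (by rw [S.r_actL, S.d_actR])
      (by rw [S.d_actR, S.d_actL]) (by rw [S.r_actL, S.r_actR]) h
  have hinvR : ∀ a b, S.star a b = S.ostar a b →
      S.star a (S.inv b) = S.ostar a (S.inv b) := by
    intro a b h
    simp only [SemiregularGroupoid.star, SemiregularGroupoid.ostar] at h ⊢
    rw [S.d_inv, S.actL_inv, S.r_inv, S.actL_inv]
    exact (S.cross (by rw [S.r_actL, S.d_actR]) (by rw [S.r_actR, S.d_actL])
      (by rw [S.d_actL, S.d_actR]) (by rw [S.r_actR, S.r_actL]) h.symm).symm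
  have hcompL : ∀ a a' b, S.r a = S.d a' → S.star a b = S.ostar a b →
      S.star a' b = S.ostar a' b → S.star (S.comp a a') b = S.ostar (S.comp a a') b := by
    intro a a' b hrd h1 h2
    simp only [SemiregularGroupoid.star, SemiregularGroupoid.ostar] at h1 h2 ⊢
    calc S.comp (S.actR (S.comp a a') (S.d b)) (S.actL (S.r (S.comp a a')) b)
        = S.comp (S.comp (S.actR a (S.d b)) (S.actR a' (S.d b))) (S.actL (S.r a') b) := by
          rw [S.actR_comp _ _ _ hrd, S.r_comp _ _ hrd]
      _ = S.comp (S.actR a (S.d b)) (S.comp (S.actR a' (S.d b)) (S.actL (S.r a') b)) := by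
          rw [S.comp_assoc _ _ _ (by rw [S.r_actR, S.d_actR, hrd])
            (by rw [S.r_actR, S.d_actL])]
      _ = S.comp (S.actR a (S.d b)) (S.comp (S.actL (S.d a') b) (S.actR a' (S.r b))) := by
          rw [h2]
      _ = S.comp (S.comp (S.actR a (S.d b)) (S.actL (S.d a') b)) (S.actR a' (S.r b)) := by
          rw [S.comp_assoc _ _ _ (by rw [S.r_actR, S.d_actL, hrd])
            (by rw [S.r_actL, S.d_actR])]
      _ = S.comp (S.comp (S.actR a (S.d b)) (S.actL (S.r a) b)) (S.actR a' (S.r b)) := by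
          rw [hrd]
      _ = S.comp (S.comp (S.actL (S.d a) b) (S.actR a (S.r b))) (S.actR a' (S.r b)) := by
          rw [h1]
      _ = S.comp (S.actL (S.d a) b) (S.comp (S.actR a (S.r b)) (S.actR a' (S.r b))) := by
          rw [S.comp_assoc _ _ _ (by rw [S.r_actL, S.d_actR])
            (by rw [S.r_actR, S.d_actR, hrd])]
      _ = S.comp (S.actL (S.d (S.comp a a')) b) (S.actR (S.comp a a') (S.r b)) := by
          rw [← S.actR_comp _ _ _ hrd, S.d_comp _ _ hrd]
  have hcompR : ∀ a b b', S.r b = S.d b' → S.star a b = S.ostar a b →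
      S.star a b' = S.ostar a b' → S.star a (S.comp b b') = S.ostar a (S.comp b b') := by
    intro a b b' hrd h1 h2
    simp only [SemiregularGroupoid.star, SemiregularGroupoid.ostar] at h1 h2 ⊢
    calc S.comp (S.actR a (S.d (S.comp b b'))) (S.actL (S.r a) (S.comp b b'))
        = S.comp (S.actR a (S.d b)) (S.comp (S.actL (S.r a) b) (S.actL (S.r a) b')) := by
          rw [S.d_comp _ _ hrd, S.actL_comp _ _ _ hrd]
      _ = S.comp (S.comp (S.actR a (S.d b)) (S.actL (S.r a) b)) (S.actL (S.r a) b') := by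
          rw [S.comp_assoc _ _ _ (by rw [S.r_actR, S.d_actL])
            (by rw [S.r_actL, S.d_actL, hrd])]
      _ = S.comp (S.comp (S.actL (S.d a) b) (S.actR a (S.r b))) (S.actL (S.r a) b') := by
          rw [h1]
      _ = S.comp (S.actL (S.d a) b) (S.comp (S.actR a (S.r b)) (S.actL (S.r a) b')) := by
          rw [S.comp_assoc _ _ _ (by rw [S.r_actL, S.d_actR])
            (by rw [S.r_actR, S.d_actL, hrd])]
      _ = S.comp (S.actL (S.d a) b) (S.comp (S.actR a (S.d b')) (S.actL (S.r a) b')) := by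
          rw [hrd]
      _ = S.comp (S.actL (S.d a) b) (S.comp (S.actL (S.d a) b') (S.actR a (S.r b'))) := by
          rw [h2]
      _ = S.comp (S.comp (S.actL (S.d a) b) (S.actL (S.d a) b')) (S.actR a (S.r b')) := by
          rw [S.comp_assoc _ _ _ (by rw [S.r_actL, S.d_actL, hrd])
            (by rw [S.r_actL, S.d_actR])]
      _ = S.comp (S.actL (S.d a) (S.comp b b')) (S.actR a (S.r (S.comp b b'))) := by
          rw [← S.actL_comp _ _ _ hrd, S.r_comp _ _ hrd]
  suffices key : ∀ a, GenBy S E a → ∀ b, GenBy S E b → S.star a b = S.ostar a b by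
    intro α β
    exact key α (hgen α) β (hgen β)
  intro a ha
  induction ha with
  | idm v => intro b _; rw [star_idL, ostar_idL]
  | inv γ _ ih => intro b hb; exact hinvL γ b (ih b hb)
  | comp γ δ hrd _ _ ih1 ih2 => intro b hb; exact hcompL γ δ b hrd (ih1 b hb) (ih2 b hb)
  | edge γ hγ =>
    intro b hb
    induction hb with
    | idm v => rw [star_idR, ostar_idR]
    | inv δ _ ih => exact hinvR γ δ ih
    | comp δ δ' hrd _ _ ih1 ih2 => exact hcompR γ δ δ' hrd ih1 ih2
    | edge δ hδ =>
      obtain ⟨p, s, q, rfl⟩ := hγ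
      obtain ⟨p', s', q', rfl⟩ := hδ
      exact hedge p s q p' s' q'
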